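/- If C is a pointed polyhedral cone with nonempty interior, then any maximizer of r_{X,C} over X is Pareto maximal in X with respect to the order induced by C: if x̄ ∈ X satisfies r_{X,C}(x̄) = max_{x ∈ X} r_{X,C}(x), then there is no y ∈ X with y ≠ x̄ and y - x̄ ∈ C. -/

import Mathlib

open scoped BigOperators

noncomputable section

/-- Euclidean dot product on `Fin d → ℝ`. -/
def dotp {d : ℕ} (w x : Fin d → ℝ) : ℝ := ∑ i, w i * x i

/-- The dual cone `C⁺ = {v | ∀ z ∈ C, vᵀz ≥ 0}`. -/
def dCone {d : ℕ} (C : Set (Fin d → ℝ)) : Set (Fin d → ℝ) := {v | ∀ z ∈ C, 0 ≤ dotp v z}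

/-- The w-ranking function `r_{X,w}(z) = #{x ∈ X | wᵀx ≤ wᵀz}`. -/
def rankW {d : ℕ} (X : Set (Fin d → ℝ)) (w z : Fin d → ℝ) : ℕ :=
  {x ∈ X | dotp w x ≤ dotp w z}.ncard

/-- The cone ranking function `r_{X,C}(z) = min_{w ∈ C⁺\{0}} r_{X,w}(z)`. -/
def rankC {d : ℕ} (X C : Set (Fin d → ℝ)) (z : Fin d → ℝ) : ℕ :=
  sInf ((fun w => rankW X w z) '' (dCone C \ {0}))

lemma dotp_comm {d : ℕ} (a b : Fin d → ℝ) : dotp a b = dotp b a := by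
  simp [dotp, mul_comm]

lemma dotp_add_smul {d : ℕ} (w w₀ : Fin d → ℝ) (ε : ℝ) (x : Fin d → ℝ) :
    dotp (w + ε • w₀) x = dotp w x + ε * dotp w₀ x := by
  simp [dotp, add_mul, Finset.sum_add_distrib, Finset.mul_sum, mul_assoc]

lemma dotp_sub {d : ℕ} (w a b : Fin d → ℝ) : dotp w (a - b) = dotp w a - dotp w b := by
  simp [dotp, mul_sub, Finset.sum_sub_distrib]

lemma dotp_zero_left {d : ℕ} (x : Fin d → ℝ) : dotp (0 : Fin d → ℝ) x = 0 := by
  simp [dotp]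

open scoped InnerProductSpace in
lemma inner_eq_dotp {d : ℕ} (a b : EuclideanSpace ℝ (Fin d)) :
    ⟪a, b⟫_ℝ = dotp a b := by
  simp [PiLp.inner_apply, RCLike.inner_apply, dotp, mul_comm]

/-- Separation: for a pointed closed convex cone `C` and a nonzero `c ∈ C`, there
is `w₀ ∈ C⁺` with `w₀ᵀc > 0`. -/
lemma exists_dual_pos {d : ℕ} (C : Set (Fin d → ℝ))
    (hCcl : IsClosed C) (hCcv : Convex ℝ C)
    (hCcone : ∀ c ∈ C, ∀ s : ℝ, 0 ≤ s → s • c ∈ C)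
    (hpointed : ∀ x ∈ C, -x ∈ C → x = 0)
    {c : Fin d → ℝ} (hc : c ∈ C) (hc0 : c ≠ 0) :
    ∃ w₀ ∈ dCone C, 0 < dotp w₀ c := by
  classical
  have hCne : C.Nonempty := ⟨c, hc⟩
  have hb : -c ∉ C := by
    intro hmem
    exact hc0 (hpointed c hc hmem)
  obtain ⟨f, u, hfu, huf⟩ := geometric_hahn_banach_closed_point hCcv hCcl hb
  have h0 : (0 : Fin d → ℝ) ∈ C := by simpa using hCcone c hc 0 le_rfl
  have hu : 0 < u := by simpa using hfu 0 h0
  have hle : ∀ z ∈ C, f z ≤ 0 := by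
    intro z hz
    by_contra hpos
    push_neg at hpos
    have := hfu ((u / f z) • z) (hCcone z hz _ (by positivity))
    rw [map_smul, smul_eq_mul, div_mul_cancel₀ _ hpos.ne'] at this
    exact lt_irrefl _ this
  have hrep : ∀ z, f z = dotp (fun i => f (Pi.single i 1)) z := by
    intro z
    conv_lhs => rw [show z = ∑ i, z i • Pi.single i (1:ℝ) from by ext j; simp [Pi.single_apply]]
    simp [map_sum, dotp, mul_comm]
  have hneg : ∀ z, dotp (-(fun i => f (Pi.single i 1))) z = - f z := by
    intro z
    rw [hrep]
    simp [dotp, Finset.sum_neg_distrib]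
  refine ⟨-(fun i => f (Pi.single i 1)), ?_, ?_⟩
  · intro z hz
    have := hle z hz
    rw [hneg]
    linarith
  · rw [hneg]
    have := huf
    rw [map_neg] at this
    linarith

theorem maximizer_is_pareto_maximal {d : ℕ}
    (X : Set (Fin d → ℝ)) (hX : X.Finite) (C : Set (Fin d → ℝ))
    (hCcl : IsClosed C) (hCcv : Convex ℝ C)
    (hCcone : ∀ c ∈ C, ∀ s : ℝ, 0 ≤ s → s • c ∈ C)
    (hCne : C.Nonempty) (hCpr : C ≠ Set.univ)
    (hpointed : ∀ x ∈ C, -x ∈ C → x = 0) (hpoly : ∃ (n : ℕ) (v : Fin n → (Fin d → ℝ)), C = {z | ∀ i, 0 ≤ dotp (v i) z})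
    (hint : (interior C).Nonempty)
    (xbar : Fin d → ℝ) (hxbar : xbar ∈ X)
    (hmax : ∀ x ∈ X, rankC X C x ≤ rankC X C xbar) :
    ∀ y ∈ X, y - xbar ∈ C → y = xbar := by
  classical
  intro y hy hyc
  by_contra hne
  have hyx0 : y - xbar ≠ 0 := sub_ne_zero.mpr hne
  obtain ⟨w₀, hw₀C, hw₀pos⟩ := exists_dual_pos C hCcl hCcv hCcone hpointed hyc hyx0
  have hw₀ne : w₀ ∉ ({0} : Set (Fin d → ℝ)) := by
    intro h
    rw [Set.mem_singleton_iff] at h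
    rw [h, dotp_zero_left] at hw₀pos
    exact lt_irrefl 0 hw₀pos
  have hne_img : ((fun w => rankW X w y) '' (dCone C \ {0})).Nonempty :=
    ⟨_, ⟨w₀, ⟨hw₀C, hw₀ne⟩, rfl⟩⟩
  obtain ⟨w, ⟨hwC, hwne⟩, hweq⟩ := Nat.sInf_mem hne_img
  -- choose a small ε > 0 preserving strict inequalities
  have key : ∀ᶠ ε in nhdsWithin (0:ℝ) (Set.Ioi 0), ∀ x ∈ X,
      dotp w y < dotp w x → dotp (w + ε • w₀) y < dotp (w + ε • w₀) x := by
    rw [hX.eventually_all]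
    intro x hx
    by_cases h : dotp w y < dotp w x
    · have hcont : Filter.Tendsto
          (fun ε : ℝ => (dotp w x + ε * dotp w₀ x) - (dotp w y + ε * dotp w₀ y))
          (nhdsWithin (0:ℝ) (Set.Ioi 0)) (nhds (dotp w x - dotp w y)) := by
        have : Filter.Tendsto
            (fun ε : ℝ => (dotp w x + ε * dotp w₀ x) - (dotp w y + ε * dotp w₀ y))
            (nhds (0:ℝ)) (nhds ((dotp w x + 0 * dotp w₀ x) - (dotp w y + 0 * dotp w₀ y))) := by
          exact ((continuous_const.add (continuous_id.mul continuous_const)).sub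
            (continuous_const.add (continuous_id.mul continuous_const))).tendsto 0
        simpa using this.mono_left nhdsWithin_le_nhds
      have hev := hcont.eventually (eventually_gt_nhds (by linarith : (0:ℝ) < dotp w x - dotp w y))
      filter_upwards [hev] with ε hε _
      rw [dotp_add_smul, dotp_add_smul]
      linarith
    · filter_upwards with ε hc
      exact absurd hc h
  obtain ⟨ε, hεkey, hεpos⟩ := (key.and self_mem_nhdsWithin).exists
  set w' := w + ε • w₀ with hw'def
  have hw'C : w' ∈ dCone C := by
    intro z hz
    rw [dotp_add_smul]
    have h1 := hwC z hz
    have h2 := hw₀C z hz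
    nlinarith
  have hstrict : dotp w' xbar < dotp w' y := by
    have h1 : 0 < dotp w' (y - xbar) := by
      rw [dotp_add_smul]
      have h2 := hwC _ hyc
      nlinarith
    rw [dotp_sub] at h1
    linarith
  have hw'ne : w' ∉ ({0} : Set (Fin d → ℝ)) := by
    intro h
    rw [Set.mem_singleton_iff] at h
    rw [h, dotp_zero_left, dotp_zero_left] at hstrict
    exact lt_irrefl 0 hstrict
  -- counting
  set A := {x ∈ X | dotp w' x ≤ dotp w' xbar} with hA
  set B := {x ∈ X | dotp w' x ≤ dotp w' y} with hB
  set B' := {x ∈ X | dotp w x ≤ dotp w y} with hB'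
  have hAB : A ⊂ B := by
    constructor
    · intro x ⟨hx1, hx2⟩
      exact ⟨hx1, le_trans hx2 hstrict.le⟩
    · intro hsub
      have hyB : y ∈ B := ⟨hy, le_refl _⟩
      have : y ∈ A := by
        by_contra hyA
        have : ¬ (B ⊆ A) := fun h => hyA (h hyB)
        exact this hsub
      exact absurd this.2 (not_le.mpr hstrict)
  have hBB' : B ⊆ B' := by
    intro x ⟨hx1, hx2⟩
    refine ⟨hx1, ?_⟩
    by_contra hlt
    exact absurd hx2 (not_le.mpr (hεkey x hx1 (not_le.mp hlt)))
  have hcard1 : A.ncard < B.ncard :=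
    Set.ncard_lt_ncard hAB (hX.subset (fun x hx => hx.1))
  have hcard2 : B.ncard ≤ B'.ncard :=
    Set.ncard_le_ncard hBB' (hX.subset (fun x hx => hx.1))
  have h1 : rankC X C xbar ≤ rankW X w' xbar :=
    Nat.sInf_le ⟨w', ⟨hw'C, hw'ne⟩, rfl⟩
  have h2 : rankC X C y ≤ rankC X C xbar := hmax y hy
  have : rankC X C xbar < rankC X C y := by
    calc rankC X C xbar ≤ rankW X w' xbar := h1
      _ = A.ncard := rfl
      _ < B.ncard := hcard1
      _ ≤ B'.ncard := hcard2
      _ = rankW X w y := rfl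
      _ = rankC X C y := hweq
  omega
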